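/- The dual function π(y) = min_{x∈𝒳} [Ψ(x,y) + r(x) + μω_𝒳(x)] is Fréchet differentiable on 𝒴 with ∇π(y) = ∇_yΨ(x*(y), y), and ∇π is L_π-Lipschitz on 𝒴 where L_π = L_yy + L_xy²/μ: ‖∇π(y) − ∇π(y')‖ ≤ (L_yy + L_xy²/μ)‖y − y'‖ for all y, y' ∈ 𝒴. -/

import Mathlib

open Filter Topology Set

/-- Gradient inequality for a convex function. -/
lemma convexOn_fderiv_le {Y : Type*} [NormedAddCommGroup Y] [NormedSpace ℝ Y]
    {s : Set Y} {f : Y → ℝ} (hf : ConvexOn ℝ s f) {y y' : Y} (hy : y ∈ s) (hy' : y' ∈ s)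
    {D : Y →L[ℝ] ℝ} (hd : HasFDerivAt f D y) : D (y' - y) ≤ f y' - f y := by
  set v := y' - y with hv
  have hc : HasDerivAt (fun t : ℝ => y + t • v) v 0 := by
    simpa using ((hasDerivAt_id (0 : ℝ)).smul_const v).const_add y
  have h0 : y + (0 : ℝ) • v = y := by simp
  have hg : HasDerivAt (fun t : ℝ => f (y + t • v)) (D v) 0 := by
    have := (h0 ▸ hd).comp_hasDerivAt 0 hc
    exact this
  have hslope : Tendsto (slope (fun t : ℝ => f (y + t • v)) 0) (𝓝[>] 0) (𝓝 (D v)) :=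
    (hasDerivAt_iff_tendsto_slope.mp hg).mono_left
      (nhdsWithin_mono 0 fun t ht => ne_of_gt ht)
  refine le_of_tendsto hslope ?_
  filter_upwards [Ioc_mem_nhdsGT_of_mem (by constructor <;> norm_num : (0:ℝ) ∈ Ico 0 1)]
    with t ht
  have ht0 : 0 < t := ht.1
  have ht1 : t ≤ 1 := ht.2
  have hmem : y + t • v = (1 - t) • y + t • y' := by
    rw [hv]; module
  have hcv := hf.2 hy hy' (by linarith : (0:ℝ) ≤ 1 - t) ht0.le (by ring)
  rw [← hmem] at hcv
  rw [slope_def_field]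
  simp only [smul_eq_mul, zero_smul, add_zero, sub_zero] at hcv ⊢
  rw [div_le_iff₀ ht0]
  nlinarith

/-- Quadratic growth at the minimizer of a strongly convex function. -/
lemma strongConvexOn_min_growth {X : Type*} [NormedAddCommGroup X] [NormedSpace ℝ X]
    {s : Set X} {ψ : X → ℝ} {μ : ℝ} (hsc : StrongConvexOn s μ ψ) {z x : X}
    (hz : z ∈ s) (hx : x ∈ s) (hmin : ∀ w ∈ s, ψ z ≤ ψ w) :
    ψ z + μ / 2 * ‖x - z‖ ^ 2 ≤ ψ x := by
  set c : ℝ := μ / 2 * ‖x - z‖ ^ 2 with hc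
  have key : ∀ t : ℝ, t ∈ Ioc (0:ℝ) 1 → ψ z + (1 - t) * c ≤ ψ x := by
    intro t ht
    have ht0 : 0 < t := ht.1
    have ht1 : t ≤ 1 := ht.2
    have h1 := hsc.2 hx hz ht0.le (by linarith : (0:ℝ) ≤ 1 - t) (by ring)
    have h2 : ψ z ≤ ψ (t • x + (1 - t) • z) :=
      hmin _ (hsc.1 hx hz ht0.le (by linarith) (by ring))
    simp only [smul_eq_mul] at h1
    rw [← hc] at h1
    have h3 : ψ z ≤ t * ψ x + (1 - t) * ψ z - t * (1 - t) * c := h2.trans h1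
    have h4 : t * (ψ z + (1 - t) * c) ≤ t * ψ x := by nlinarith
    exact le_of_mul_le_mul_left h4 ht0
  have hlim : Tendsto (fun t : ℝ => ψ z + (1 - t) * c) (𝓝[>] 0) (𝓝 (ψ z + c)) := by
    have : Tendsto (fun t : ℝ => ψ z + (1 - t) * c) (𝓝 0) (𝓝 (ψ z + (1 - 0) * c)) := by
      apply Tendsto.add tendsto_const_nhds
      exact (Tendsto.sub tendsto_const_nhds tendsto_id).mul tendsto_const_nhds
    simpa using this.mono_left nhdsWithin_le_nhds
  exact le_of_tendsto hlim (by
    filter_upwards [Ioc_mem_nhdsGT_of_mem (by constructor <;> norm_num : (0:ℝ) ∈ Ico 0 1)]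
      with t ht using key t ht)

/-- The dual function `π(y) = min_{x∈𝒳} [Ψ(x,y) + r(x) + μω_𝒳(x)]` is Fréchet differentiable
on `𝒴` with `∇π(y) = ∇_yΨ(x*(y), y)`, and `∇π` is `(L_yy + L_xy²/μ)`-Lipschitz on `𝒴`. -/
theorem dual_function_smooth
    {X Y : Type*} [NormedAddCommGroup X] [NormedSpace ℝ X] [FiniteDimensional ℝ X]
    [NormedAddCommGroup Y] [NormedSpace ℝ Y] [FiniteDimensional ℝ Y]
    (𝒳 : Set X) (h𝒳ne : 𝒳.Nonempty) (h𝒳cl : IsClosed 𝒳) (h𝒳cv : Convex ℝ 𝒳)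
    (𝒴 : Set Y) (h𝒴ne : 𝒴.Nonempty) (h𝒴cv : Convex ℝ 𝒴) (h𝒴cp : IsCompact 𝒴)
    (r : X → ℝ) (hrcv : ConvexOn ℝ 𝒳 r) (hrlsc : LowerSemicontinuousOn r 𝒳)
    (ω : X → ℝ) (hωc : ContinuousOn ω 𝒳) (hωsc : StrongConvexOn 𝒳 1 ω)
    (μ : ℝ) (hμ : 0 < μ)
    (Ψ : X → Y → ℝ)
    (hΨc : ContinuousOn (fun p : X × Y => Ψ p.1 p.2) (𝒳 ×ˢ 𝒴))
    (hΨcv : ∀ y ∈ 𝒴, ConvexOn ℝ 𝒳 (fun x => Ψ x y))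
    (hΨconc : ∀ x ∈ 𝒳, ConcaveOn ℝ 𝒴 (Ψ x))
    (V : Set X) (hV : IsOpen V) (hXV : 𝒳 ⊆ V)
    (Ψx : X → Y → X →L[ℝ] ℝ)
    (hΨx : ∀ y ∈ 𝒴, ∀ x ∈ V, HasFDerivAt (fun x' => Ψ x' y) (Ψx x y) x)
    (W : Set Y) (hW : IsOpen W) (hYW : 𝒴 ⊆ W)
    (Ψy : X → Y → Y →L[ℝ] ℝ)
    (hΨy : ∀ x ∈ 𝒳, ∀ y ∈ W, HasFDerivAt (fun y' => Ψ x y') (Ψy x y) y)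
    (Lxy Lyy : ℝ)
    (hLxy : ∀ x ∈ 𝒳, ∀ y ∈ 𝒴, ∀ y' ∈ 𝒴, ‖Ψx x y - Ψx x y'‖ ≤ Lxy * ‖y - y'‖)
    (hLyx : ∀ x ∈ 𝒳, ∀ x' ∈ 𝒳, ∀ y ∈ 𝒴, ‖Ψy x y - Ψy x' y‖ ≤ Lxy * ‖x - x'‖)
    (hLyy : ∀ x ∈ 𝒳, ∀ y ∈ 𝒴, ∀ y' ∈ 𝒴, ‖Ψy x y - Ψy x y'‖ ≤ Lyy * ‖y - y'‖)
    (xstar : Y → X)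
    (hxstarmem : ∀ y ∈ 𝒴, xstar y ∈ 𝒳)
    (hxstarmin : ∀ y ∈ 𝒴, ∀ x ∈ 𝒳,
      Ψ (xstar y) y + r (xstar y) + μ * ω (xstar y) ≤ Ψ x y + r x + μ * ω x)
    (hxstaruniq : ∀ y ∈ 𝒴, ∀ x ∈ 𝒳,
      Ψ x y + r x + μ * ω x = Ψ (xstar y) y + r (xstar y) + μ * ω (xstar y) → x = xstar y)
    (π : Y → ℝ)
    (hπ : ∀ y ∈ 𝒴, π y = Ψ (xstar y) y + r (xstar y) + μ * ω (xstar y)) :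
    (∀ y ∈ 𝒴, HasFDerivWithinAt π (Ψy (xstar y) y) 𝒴 y) ∧
    (∀ y ∈ 𝒴, ∀ y' ∈ 𝒴,
      ‖Ψy (xstar y) y - Ψy (xstar y') y'‖ ≤ (Lyy + Lxy ^ 2 / μ) * ‖y - y'‖) := by
  -- Strong convexity of the primal objective
  have hψsc : ∀ y ∈ 𝒴, StrongConvexOn 𝒳 μ (fun x => Ψ x y + r x + μ * ω x) := by
    intro y hy
    refine ⟨h𝒳cv, fun x hx z hz a b ha hb hab => ?_⟩
    have hΨ' := (hΨcv y hy).2 hx hz ha hb hab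
    have hr' := hrcv.2 hx hz ha hb hab
    have hω' := hωsc.2 hx hz ha hb hab
    simp only [smul_eq_mul] at hΨ' hr' hω' ⊢
    have hω'' : μ * ω (a • x + b • z) ≤
        a * (μ * ω x) + b * (μ * ω z) - a * b * (μ / 2 * ‖x - z‖ ^ 2) := by
      calc μ * ω (a • x + b • z)
          ≤ μ * (a * ω x + b * ω z - a * b * (1 / 2 * ‖x - z‖ ^ 2)) :=
            mul_le_mul_of_nonneg_left hω' hμ.le
        _ = a * (μ * ω x) + b * (μ * ω z) - a * b * (μ / 2 * ‖x - z‖ ^ 2) := by ring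
    linarith
  -- quadratic growth at xstar
  have hgrow : ∀ y ∈ 𝒴, ∀ x ∈ 𝒳,
      (Ψ (xstar y) y + r (xstar y) + μ * ω (xstar y)) + μ / 2 * ‖x - xstar y‖ ^ 2 ≤
        Ψ x y + r x + μ * ω x :=
    fun y hy x hx =>
      strongConvexOn_min_growth (hψsc y hy) (hxstarmem y hy) hx
        (fun w hw => hxstarmin y hy w hw)
  have hLxy_nonneg : ∀ y ∈ 𝒴, ∀ y' ∈ 𝒴, 0 ≤ Lxy * ‖y - y'‖ := by
    intro y hy y' hy'
    obtain ⟨x0, hx0⟩ := h𝒳ne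
    exact (norm_nonneg _).trans (hLxy x0 hx0 y hy y' hy')
  -- Lipschitz continuity of xstar
  have hxlip : ∀ y ∈ 𝒴, ∀ y' ∈ 𝒴, μ * ‖xstar y - xstar y'‖ ≤ Lxy * ‖y - y'‖ := by
    intro y hy y' hy'
    set d := ‖xstar y - xstar y'‖ with hd
    have hdnn : 0 ≤ d := norm_nonneg _
    have h1 := hgrow y hy (xstar y') (hxstarmem y' hy')
    have h2 := hgrow y' hy' (xstar y) (hxstarmem y hy)
    have hmvt : ‖(Ψ (xstar y') y - Ψ (xstar y') y') - (Ψ (xstar y) y - Ψ (xstar y) y')‖ ≤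
        (Lxy * ‖y - y'‖) * ‖xstar y' - xstar y‖ :=
      Convex.norm_image_sub_le_of_norm_hasFDerivWithin_le
        (f := fun x => Ψ x y - Ψ x y') (f' := fun x => Ψx x y - Ψx x y')
        (fun x hx => ((hΨx y hy x (hXV hx)).sub (hΨx y' hy' x (hXV hx))).hasFDerivWithinAt)
        (fun x hx => hLxy x hx y hy y' hy') h𝒳cv (hxstarmem y hy) (hxstarmem y' hy')
    have e1 : ‖xstar y' - xstar y‖ = d := by rw [hd, norm_sub_rev]
    rw [e1] at hmvt h1
    have habs : (Ψ (xstar y') y - Ψ (xstar y') y') - (Ψ (xstar y) y - Ψ (xstar y) y') ≤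
        (Lxy * ‖y - y'‖) * d :=
      (le_abs_self _).trans (by rwa [← Real.norm_eq_abs])
    have hsum : μ * d ^ 2 ≤ (Lxy * ‖y - y'‖) * d := by nlinarith
    rcases hdnn.eq_or_lt with h | h
    · rw [← h, mul_zero]; exact hLxy_nonneg y hy y' hy'
    · nlinarith
  -- the Lipschitz bound on the gradient (second claim)
  have hlip : ∀ y ∈ 𝒴, ∀ y' ∈ 𝒴,
      ‖Ψy (xstar y) y - Ψy (xstar y') y'‖ ≤ (Lyy + Lxy ^ 2 / μ) * ‖y - y'‖ := by
    intro y hy y' hy'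
    rcases eq_or_ne y y' with rfl | hne
    · simp
    · have hyy : (0:ℝ) < ‖y - y'‖ := by rw [norm_pos_iff, sub_ne_zero]; exact hne
      have hLxy0 : (0:ℝ) ≤ Lxy := by
        have h := hLxy_nonneg y hy y' hy'
        nlinarith
      have hxl : ‖xstar y - xstar y'‖ ≤ Lxy / μ * ‖y - y'‖ := by
        rw [div_mul_eq_mul_div, le_div_iff₀ hμ]
        have := hxlip y hy y' hy'
        linarith
      calc ‖Ψy (xstar y) y - Ψy (xstar y') y'‖
          ≤ ‖Ψy (xstar y) y - Ψy (xstar y') y‖ + ‖Ψy (xstar y') y - Ψy (xstar y') y'‖ :=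
            norm_sub_le_norm_sub_add_norm_sub _ _ _
        _ ≤ Lxy * ‖xstar y - xstar y'‖ + Lyy * ‖y - y'‖ :=
            add_le_add (hLyx _ (hxstarmem y hy) _ (hxstarmem y' hy') y hy)
              (hLyy _ (hxstarmem y' hy') y hy y' hy')
        _ ≤ Lxy * (Lxy / μ * ‖y - y'‖) + Lyy * ‖y - y'‖ := by
            have := mul_le_mul_of_nonneg_left hxl hLxy0
            linarith
        _ = (Lyy + Lxy ^ 2 / μ) * ‖y - y'‖ := by ring
  refine ⟨?_, hlip⟩
  -- differentiability
  intro y hy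
  have hub : ∀ y' ∈ 𝒴, π y' - π y - Ψy (xstar y) y (y' - y) ≤ 0 := by
    intro y' hy'
    have hmin' : π y' ≤ Ψ (xstar y) y' + r (xstar y) + μ * ω (xstar y) := by
      rw [hπ y' hy']; exact hxstarmin y' hy' _ (hxstarmem y hy)
    have hconc : Ψ (xstar y) y' - Ψ (xstar y) y ≤ Ψy (xstar y) y (y' - y) := by
      have hcv : ConvexOn ℝ 𝒴 (fun z => -Ψ (xstar y) z) := (hΨconc _ (hxstarmem y hy)).neg
      have hder : HasFDerivAt (fun z => -Ψ (xstar y) z) (-Ψy (xstar y) y) y :=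
        (hΨy _ (hxstarmem y hy) y (hYW hy)).neg
      have h := convexOn_fderiv_le hcv hy hy' hder
      simp only [ContinuousLinearMap.neg_apply] at h
      linarith
    have he := hπ y hy
    linarith
  have hlb : ∀ y' ∈ 𝒴, -((Lyy + Lxy ^ 2 / μ) * ‖y - y'‖ * ‖y' - y‖) ≤
      π y' - π y - Ψy (xstar y) y (y' - y) := by
    intro y' hy'
    have hmin' : π y ≤ Ψ (xstar y') y + r (xstar y') + μ * ω (xstar y') := by
      rw [hπ y hy]; exact hxstarmin y hy _ (hxstarmem y' hy')
    have hconc : Ψy (xstar y') y' (y' - y) ≤ Ψ (xstar y') y' - Ψ (xstar y') y := by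
      have hcv : ConvexOn ℝ 𝒴 (fun z => -Ψ (xstar y') z) := (hΨconc _ (hxstarmem y' hy')).neg
      have hder : HasFDerivAt (fun z => -Ψ (xstar y') z) (-Ψy (xstar y') y') y' :=
        (hΨy _ (hxstarmem y' hy') y' (hYW hy')).neg
      have h := convexOn_fderiv_le hcv hy' hy hder
      simp only [ContinuousLinearMap.neg_apply] at h
      have hmap : Ψy (xstar y') y' (y - y') = -(Ψy (xstar y') y' (y' - y)) := by
        rw [← neg_sub y' y, map_neg]
      linarith
    have hEerr : Ψy (xstar y) y (y' - y) - (Lyy + Lxy ^ 2 / μ) * ‖y - y'‖ * ‖y' - y‖ ≤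
        Ψy (xstar y') y' (y' - y) := by
      have h1 : (Ψy (xstar y) y - Ψy (xstar y') y') (y' - y) ≤
          ‖Ψy (xstar y) y - Ψy (xstar y') y'‖ * ‖y' - y‖ :=
        (le_abs_self _).trans
          ((Ψy (xstar y) y - Ψy (xstar y') y').le_opNorm (y' - y))
      have h2 := mul_le_mul_of_nonneg_right (hlip y hy y' hy') (norm_nonneg (y' - y))
      simp only [ContinuousLinearMap.sub_apply] at h1
      linarith
    have he := hπ y' hy'
    linarith
  have herr : ∀ y' ∈ 𝒴, |π y' - π y - Ψy (xstar y) y (y' - y)| ≤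
      (|Lyy + Lxy ^ 2 / μ| + 1) * ‖y' - y‖ * ‖y' - y‖ := by
    intro y' hy'
    have h1 := hub y' hy'
    have h2 := hlb y' hy'
    have hnn : (0:ℝ) ≤ ‖y' - y‖ := norm_nonneg _
    have habs := le_abs_self (Lyy + Lxy ^ 2 / μ)
    rw [abs_le]
    constructor
    · have hA : (Lyy + Lxy ^ 2 / μ) * ‖y - y'‖ * ‖y' - y‖ ≤
          (|Lyy + Lxy ^ 2 / μ| + 1) * ‖y' - y‖ * ‖y' - y‖ := by
        rw [norm_sub_rev y y']
        nlinarith [mul_nonneg hnn hnn]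
      linarith
    · have hB : (0:ℝ) ≤ (|Lyy + Lxy ^ 2 / μ| + 1) * ‖y' - y‖ * ‖y' - y‖ := by positivity
      linarith
  refine HasFDerivWithinAt.of_isLittleO ?_
  rw [Asymptotics.isLittleO_iff]
  intro c hc
  have hC : (0:ℝ) < |Lyy + Lxy ^ 2 / μ| + 1 := by positivity
  filter_upwards [self_mem_nhdsWithin,
    mem_nhdsWithin_of_mem_nhds (Metric.ball_mem_nhds y (div_pos hc hC))] with y' hy' hball
  have hb : ‖y' - y‖ < c / (|Lyy + Lxy ^ 2 / μ| + 1) := by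
    rwa [Metric.mem_ball, dist_eq_norm] at hball
  have hbd := herr y' hy'
  rw [Real.norm_eq_abs]
  calc |π y' - π y - Ψy (xstar y) y (y' - y)| ≤
      (|Lyy + Lxy ^ 2 / μ| + 1) * ‖y' - y‖ * ‖y' - y‖ := hbd
    _ ≤ c * ‖y' - y‖ := by
        have h3 : ‖y' - y‖ * (|Lyy + Lxy ^ 2 / μ| + 1) ≤ c := (le_div_iff₀ hC).mp hb.le
        nlinarith [norm_nonneg (y' - y)]
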